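/- Suppose f : ℝ^n → ℝ is differentiable with L-Lipschitz gradient, f attains its minimum value f* at some x*, and f satisfies the Regularity Condition RC(α, β) at x* with f(x*) = f*. Then f satisfies the Polyak-Łojasiewicz inequality with constant μ = 1/(β² L), i.e., (1/2)‖∇f(z)‖² ≥ (1/(β² L))(f(z) − f*) for all z ∈ ℝ^n. -/

import Mathlib

open scoped RealInnerProductSpace
set_option maxHeartbeats 1000000

lemma inner_gradient_eq {n : ℕ} (f : EuclideanSpace ℝ (Fin n) → ℝ)
    (x v : EuclideanSpace ℝ (Fin n)) :
    ⟪gradient f x, v⟫ = fderiv ℝ f x v := by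
  simp [gradient, InnerProductSpace.toDual_symm_apply]

/-- RC(α,β) plus L-Lipschitz gradient implies the PL inequality
with constant 1/(β²L). -/
theorem rc_implies_pl {n : ℕ} (f : EuclideanSpace ℝ (Fin n) → ℝ)
    (hf : Differentiable ℝ f)
    (L : ℝ) (hL : 0 < L)
    (hLip : ∀ u v, ‖gradient f u - gradient f v‖ ≤ L * ‖u - v‖)
    (xstar : EuclideanSpace ℝ (Fin n)) (fstar : ℝ)
    (hmin : f xstar = fstar) (hlb : ∀ z, fstar ≤ f z)
    (α β : ℝ) (hα : 0 < α) (hβ : 0 < β)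
    (hRC : ∀ z, ⟪gradient f z, z - xstar⟫ ≥
      (1 / α) * ‖gradient f z‖ ^ 2 + (1 / β) * ‖z - xstar‖ ^ 2) :
    ∀ z, (1 / 2) * ‖gradient f z‖ ^ 2 ≥ (1 / (β ^ 2 * L)) * (f z - fstar) := by
  -- gradient vanishes at the minimizer
  have hgrad0 : gradient f xstar = 0 := by
    have hmin' : IsLocalMin f xstar :=
      Filter.Eventually.of_forall (fun y => hmin ▸ hlb y)
    have := hmin'.fderiv_eq_zero
    simp [gradient, this]
  intro z
  set v := z - xstar with hv
  -- the descent lemma : f z - fstar ≤ L/2 * ‖v‖^2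
  have descent : f z - fstar ≤ L / 2 * ‖v‖ ^ 2 := by
    set φ : ℝ → ℝ := fun t => L / 2 * t ^ 2 * ‖v‖ ^ 2 - f (xstar + t • v) with hφ
    have hderivφ : ∀ t : ℝ, HasDerivAt φ
        (L * t * ‖v‖ ^ 2 - fderiv ℝ f (xstar + t • v) v) t := by
      intro t
      have hline : HasDerivAt (fun t : ℝ => xstar + t • v) v t := by
        simpa using ((hasDerivAt_id t).smul_const v).const_add xstar
      have hcomp : HasDerivAt (fun t : ℝ => f (xstar + t • v))
          (fderiv ℝ f (xstar + t • v) v) t :=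
        (hf (xstar + t • v)).hasFDerivAt.comp_hasDerivAt t hline
      have hq : HasDerivAt (fun t : ℝ => L / 2 * t ^ 2 * ‖v‖ ^ 2)
          (L * t * ‖v‖ ^ 2) t := by
        have := ((hasDerivAt_pow 2 t).const_mul (L / 2)).mul_const (‖v‖ ^ 2)
        exact this.congr_deriv (by ring)
      exact hq.sub hcomp
    have hmono : MonotoneOn φ (Set.Icc 0 1) := by
      apply monotoneOn_of_deriv_nonneg (convex_Icc 0 1)
      · exact (Differentiable.continuous
          (fun t => (hderivφ t).differentiableAt)).continuousOn
      · intro t ht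
        exact ((hderivφ t).differentiableAt).differentiableWithinAt
      · intro t ht
        rw [interior_Icc] at ht
        rw [(hderivφ t).deriv]
        have key : fderiv ℝ f (xstar + t • v) v ≤ L * t * ‖v‖ ^ 2 := by
          rw [← inner_gradient_eq]
          calc ⟪gradient f (xstar + t • v), v⟫
              = ⟪gradient f (xstar + t • v) - gradient f xstar, v⟫ := by
                rw [hgrad0]; simp
            _ ≤ ‖gradient f (xstar + t • v) - gradient f xstar‖ * ‖v‖ :=
                real_inner_le_norm _ _
            _ ≤ (L * ‖(xstar + t • v) - xstar‖) * ‖v‖ := by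
                have := hLip (xstar + t • v) xstar
                exact mul_le_mul_of_nonneg_right this (norm_nonneg v)
            _ = L * t * ‖v‖ ^ 2 := by
                have : ‖(xstar + t • v) - xstar‖ = t * ‖v‖ := by
                  simp [norm_smul, abs_of_pos ht.1]
                rw [this]; ring
        linarith
    have h01 : φ 0 ≤ φ 1 := hmono (by norm_num) (by norm_num) zero_le_one
    have hz : xstar + (1 : ℝ) • v = z := by simp [hv]
    simp only [hφ, hz] at h01
    simp only [one_pow, mul_one, zero_pow, mul_zero, zero_mul, zero_smul, add_zero,
      hmin] at h01
    linarith [h01]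
  -- from RC : ‖gradient f z‖ ≥ (1/β) ‖v‖
  have hRCz := hRC z
  have hcs : ⟪gradient f z, z - xstar⟫ ≤ ‖gradient f z‖ * ‖v‖ := by
    simpa [hv] using real_inner_le_norm (gradient f z) (z - xstar)
  have hga : (0:ℝ) ≤ (1 / α) * ‖gradient f z‖ ^ 2 := by positivity
  have hgn : (1 / β) * ‖v‖ ^ 2 ≤ ‖gradient f z‖ * ‖v‖ := by
    rw [← hv] at hRCz
    nlinarith [hRCz, hcs, hga]
  have hng : (1 / β) * ‖v‖ ≤ ‖gradient f z‖ := by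
    rcases eq_or_lt_of_le (norm_nonneg v) with h0 | h0
    · rw [← h0]; simp [norm_nonneg]
    · have := (mul_le_mul_iff_left₀ h0).mp (by nlinarith [hgn] : (1 / β) * ‖v‖ * ‖v‖ ≤ ‖gradient f z‖ * ‖v‖)
      exact this
  have hβL : 0 < β ^ 2 * L := by positivity
  rw [ge_iff_le, div_mul_eq_mul_div, one_mul, div_le_iff₀ hβL]
  rw [one_div, inv_mul_eq_div] at hng
  have hng' : ‖v‖ ≤ ‖gradient f z‖ * β := (div_le_iff₀ hβ).mp hng
  have h3 : ‖v‖ * ‖v‖ ≤ (‖gradient f z‖ * β) * (‖gradient f z‖ * β) :=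
    mul_le_mul hng' hng' (norm_nonneg _) (by positivity)
  have h4 := mul_le_mul_of_nonneg_left h3 (by positivity : (0:ℝ) ≤ L / 2)
  nlinarith [descent, h4]
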